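/- For the GNS representation of a unital C*-algebra A with faithful state μ, let E be the orthogonal projection of H = L²(A, μ) onto ℂ·1. Then for every a ∈ A, the operator norm of the commutator [E, π(a)] equals σ^μ(a) = max(‖a − μ(a)‖_μ, ‖a* − μ(a*)‖_μ). -/

import Mathlib

local notation "⟪" x ", " y "⟫" => @inner ℂ _ _ x y

lemma norm_sub_sq_of_inner_eq_zero {H : Type*} [NormedAddCommGroup H]
    [InnerProductSpace ℂ H] (x y : H) (h : ⟪x, y⟫ = 0) :
    ‖x - y‖ ^ 2 = ‖x‖ ^ 2 + ‖y‖ ^ 2 := by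
  have := @norm_add_sq_eq_norm_sq_add_norm_sq_of_inner_eq_zero ℂ H _ _ _ x (-y)
    (by rw [inner_neg_right, h, neg_zero])
  rw [norm_neg] at this
  rw [sub_eq_add_neg]
  simpa [pow_two] using this

/-- For the GNS representation π of a unital C*-algebra A on H = L²(A, μ) associated
to a faithful state μ (with cyclic unit vector ξ, so μ(a) = ⟪ξ, π(a)ξ⟫), letting E be
the orthogonal projection of H onto ℂξ = ℂ·1_A, the operator norm of the commutator
[E, π(a)] equals σ^μ(a) = max(‖a − μ(a)‖_μ, ‖a* − μ(a*)‖_μ), where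
‖c‖_μ = μ(c*c)^{1/2} = ‖π(c)ξ‖. -/
theorem norm_commutator_projection_eq_stdDev
    {A : Type*} [NormedRing A] [StarRing A] [CStarRing A]
    [NormedAlgebra ℂ A] [StarModule ℂ A] [CompleteSpace A]
    {H : Type*} [NormedAddCommGroup H] [InnerProductSpace ℂ H] [CompleteSpace H]
    (π : A →⋆ₐ[ℂ] (H →L[ℂ] H)) (ξ : H) (hξ : ‖ξ‖ = 1)
    (hcyclic : DenseRange fun a : A => π a ξ)
    (hfaithful : ∀ a : A, π a ξ = 0 → a = 0)
    (E : H →L[ℂ] H)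
    (hE : E = (ℂ ∙ ξ).subtypeL.comp (ℂ ∙ ξ).orthogonalProjection) (a : A) :
    ‖E.comp (π a) - (π a).comp E‖ =
      max ‖π a ξ - (inner ℂ ξ (π a ξ) : ℂ) • ξ‖
        ‖π (star a) ξ - (inner ℂ ξ (π (star a) ξ) : ℂ) • ξ‖ := by
  have hinner_self : ⟪ξ, ξ⟫ = 1 := by
    rw [inner_self_eq_norm_sq_to_K, hξ]; norm_num
  set μa : ℂ := ⟪ξ, π a ξ⟫ with hμa
  set μs : ℂ := ⟪ξ, π (star a) ξ⟫ with hμs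
  set v : H := π a ξ - μa • ξ with hv
  set w : H := π (star a) ξ - μs • ξ with hw
  set C : H →L[ℂ] H := E.comp (π a) - (π a).comp E with hC
  -- adjoint relation
  have hadj : ∀ x : H, ⟪ξ, π a x⟫ = ⟪π (star a) ξ, x⟫ := by
    intro x
    have : ContinuousLinearMap.adjoint (π a) = π (star a) := by
      rw [← ContinuousLinearMap.star_eq_adjoint, ← map_star]
    rw [← this, ContinuousLinearMap.adjoint_inner_left]
  -- E acts as rank-one projection
  have hEx : ∀ x : H, E x = ⟪ξ, x⟫ • ξ := by
    intro x
    rw [hE]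
    exact Submodule.starProjection_unit_singleton ℂ hξ x
  have hξv : ⟪ξ, v⟫ = 0 := by
    simp [hv, inner_sub_right, inner_smul_right, hinner_self, hξ, hμa]
  have hξw : ⟪ξ, w⟫ = 0 := by
    simp [hw, inner_sub_right, inner_smul_right, hinner_self, hξ, hμs]
  have hwξ : ⟪w, ξ⟫ = 0 := by
    rw [← inner_conj_symm, hξw, map_zero]
  have hμconj : (starRingEnd ℂ) μs = μa := by
    rw [hμs, inner_conj_symm]
    exact (hadj ξ).symm
  -- commutator formula
  have hCx : ∀ x : H, C x = ⟪w, x⟫ • ξ - ⟪ξ, x⟫ • v := by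
    intro x
    have h1 : ⟪ξ, π a x⟫ = ⟪w, x⟫ + μa * ⟪ξ, x⟫ := by
      rw [hadj x]
      have : π (star a) ξ = w + μs • ξ := by rw [hw]; abel
      rw [this, inner_add_left, inner_smul_left, hμconj]
    simp only [hC, ContinuousLinearMap.sub_apply, ContinuousLinearMap.comp_apply]
    rw [hEx (π a x), hEx x, map_smul, h1, hv]
    simp only [add_smul, smul_sub, mul_smul]
    module
  -- orthogonal decomposition of ‖C x‖²
  have hnormCx : ∀ x : H, ‖C x‖ ^ 2 = ‖⟪w, x⟫‖ ^ 2 + ‖⟪ξ, x⟫‖ ^ 2 * ‖v‖ ^ 2 := by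
    intro x
    rw [hCx x, norm_sub_sq_of_inner_eq_zero _ _ (by
      rw [inner_smul_left, inner_smul_right, hξv]; ring)]
    rw [norm_smul, norm_smul, mul_pow, mul_pow, hξ]
    ring
  set M : ℝ := max ‖v‖ ‖w‖ with hM
  have hvM : ‖v‖ ≤ M := le_max_left _ _
  have hwM : ‖w‖ ≤ M := le_max_right _ _
  have hM0 : 0 ≤ M := le_trans (norm_nonneg v) hvM
  -- upper bound
  have hub : ‖C‖ ≤ M := by
    apply ContinuousLinearMap.opNorm_le_bound _ hM0
    intro x
    set x' : H := x - ⟪ξ, x⟫ • ξ with hx'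
    have hξx' : ⟪ξ, x'⟫ = 0 := by
      simp [hx', inner_sub_right, inner_smul_right, hinner_self, hξ]
    have hwx : ⟪w, x⟫ = ⟪w, x'⟫ := by
      rw [hx', inner_sub_right, inner_smul_right, hwξ, mul_zero, sub_zero]
    have hdecomp : ‖x‖ ^ 2 = ‖⟪ξ, x⟫‖ ^ 2 + ‖x'‖ ^ 2 := by
      have hxeq : x = ⟪ξ, x⟫ • ξ + x' := by rw [hx']; abel
      have key := @norm_add_sq_eq_norm_sq_add_norm_sq_of_inner_eq_zero ℂ H _ _ _
        ((⟪ξ, x⟫ : ℂ) • ξ) x' (by rw [inner_smul_left, hξx', mul_zero])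
      conv_lhs => rw [hxeq]
      rw [norm_smul, hξ] at key
      simpa [pow_two] using key
    have hCS : ‖⟪w, x'⟫‖ ≤ ‖w‖ * ‖x'‖ := norm_inner_le_norm _ _
    have h1 : ‖C x‖ ^ 2 ≤ M ^ 2 * ‖x‖ ^ 2 := by
      rw [hnormCx x, hwx, hdecomp]
      have h2 : ‖⟪w, x'⟫‖ ^ 2 ≤ ‖w‖ ^ 2 * ‖x'‖ ^ 2 := by
        rw [← mul_pow]; exact pow_le_pow_left₀ (norm_nonneg _) hCS 2
      have hvM2 : ‖v‖ ^ 2 ≤ M ^ 2 := pow_le_pow_left₀ (norm_nonneg v) hvM 2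
      have hwM2 : ‖w‖ ^ 2 ≤ M ^ 2 := pow_le_pow_left₀ (norm_nonneg w) hwM 2
      nlinarith [sq_nonneg (‖(⟪ξ, x⟫ : ℂ)‖), sq_nonneg ‖x'‖]
    nlinarith [h1, sq_nonneg (‖C x‖ + M * ‖x‖), mul_nonneg hM0 (norm_nonneg x),
      norm_nonneg (C x)]
  -- lower bounds
  have hlv : ‖v‖ ≤ ‖C‖ := by
    have h1 : C ξ = -v := by
      rw [hCx ξ, hwξ, hinner_self, zero_smul, one_smul, zero_sub]
    have := C.le_opNorm ξ
    rw [h1, norm_neg, hξ, mul_one] at this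
    exact this
  have hlw : ‖w‖ ≤ ‖C‖ := by
    rcases eq_or_ne w 0 with h0 | h0
    · rw [h0, norm_zero]; exact norm_nonneg _
    · have h1 : C w = ⟪w, w⟫ • ξ := by
        rw [hCx w, hξw, zero_smul, sub_zero]
      have h2 : ‖C w‖ = ‖w‖ ^ 2 := by
        rw [h1, norm_smul, hξ, mul_one, inner_self_eq_norm_sq_to_K]
        simp [sq_abs]
      have := C.le_opNorm w
      rw [h2] at this
      have hw0 : 0 < ‖w‖ := norm_pos_iff.mpr h0
      nlinarith
  exact le_antisymm hub (max_le hlv hlw)
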